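/- For every integer n ≥ 1 there exists a bijection Υ from ℋ_n to Av_n(321) such that for every (P,Q) ∈ ℋ_n, area(P,Q) = inv Υ(P,Q) and col(P,Q) = lrm Υ(P,Q). -/

import Mathlib

open Finset MvPolynomial

/-- `σ` avoids the pattern 321. -/
def Avoids321 {n : ℕ} (σ : Equiv.Perm (Fin n)) : Prop :=
  ¬ ∃ i j k : Fin n, i < j ∧ j < k ∧ σ k < σ j ∧ σ j < σ i

instance {n : ℕ} : DecidablePred (Avoids321 (n := n)) := fun σ => by
  unfold Avoids321; infer_instance

/-- The set of 321-avoiding permutations of `{1,…,n}` (modelled on `Fin n`). -/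
def Av (n : ℕ) : Finset (Equiv.Perm (Fin n)) := univ.filter Avoids321

/-- The number of inversions of a permutation. -/
def invPerm {n : ℕ} (σ : Equiv.Perm (Fin n)) : ℕ :=
  (univ.filter (fun p : Fin n × Fin n => p.1 < p.2 ∧ σ p.2 < σ p.1)).card

/-- Position `i` is a left-right maximum of `σ`. -/
def IsLRMax {n : ℕ} (σ : Equiv.Perm (Fin n)) (i : Fin n) : Prop :=
  ∀ j, j ≤ i → σ j ≤ σ i

instance {n : ℕ} (σ : Equiv.Perm (Fin n)) : DecidablePred (IsLRMax σ) := fun i => by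
  unfold IsLRMax; infer_instance

/-- The number of left-right maxima of `σ`. -/
def lrm {n : ℕ} (σ : Equiv.Perm (Fin n)) : ℕ := (univ.filter (IsLRMax σ)).card

/-- The number of fixed points of `σ`. -/
def fixPerm {n : ℕ} (σ : Equiv.Perm (Fin n)) : ℕ := (univ.filter (fun i => σ i = i)).card

/-- The number of excedances of `σ`. -/
def excPerm {n : ℕ} (σ : Equiv.Perm (Fin n)) : ℕ := (univ.filter (fun i => i < σ i)).card

/-- The descent set of `σ`: `i` is in it iff `σ` descends from position `i+1` to `i+2`
(0-based index `i` corresponds to the 1-based descent position `i+1`). -/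
def DesPerm {n : ℕ} (σ : Equiv.Perm (Fin n)) : Finset (Fin n) :=
  univ.filter (fun i => ∃ h : i.val + 1 < n, σ ⟨i.val + 1, h⟩ < σ i)

/-- The number of descents of `σ`. -/
def desPerm {n : ℕ} (σ : Equiv.Perm (Fin n)) : ℕ := (DesPerm σ).card

/-- The major index of `σ` (descents at 1-based positions). -/
def majPerm {n : ℕ} (σ : Equiv.Perm (Fin n)) : ℕ := ∑ i ∈ DesPerm σ, (i.val + 1)

/-- Number of `true` letters among the first `i` letters of the word `P`. -/
def UpCt {m : ℕ} (P : Fin m → Bool) (i : ℕ) : ℕ :=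
  (univ.filter (fun j : Fin m => j.val < i ∧ P j = true)).card

/-- Number of `false` letters among the first `i` letters of the word `P`. -/
def DownCt {m : ℕ} (P : Fin m → Bool) (i : ℕ) : ℕ :=
  (univ.filter (fun j : Fin m => j.val < i ∧ P j = false)).card

/-- A word (with `true` = U, `false` = D) is a Dyck word: every prefix has at least as
many U's as D's, and the total numbers of U's and D's agree. -/
def IsDyck {m : ℕ} (P : Fin m → Bool) : Prop :=
  (∀ i, i ≤ m → DownCt P i ≤ UpCt P i) ∧ UpCt P m = DownCt P m

instance {m : ℕ} : DecidablePred (IsDyck (m := m)) := fun P => by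
  unfold IsDyck; infer_instance

/-- The Dyck paths of semilength `n`, as words of length `2n`. -/
def DyckSet (n : ℕ) : Finset (Fin (2 * n) → Bool) := univ.filter IsDyck

/-- Valleys (descents of the word, i.e. factors `DU`), recorded by the 0-based
index of the `D` step. -/
def Valleys {m : ℕ} (P : Fin m → Bool) : Finset (Fin m) :=
  univ.filter (fun j => P j = false ∧ ∃ h : j.val + 1 < m, P ⟨j.val + 1, h⟩ = true)

/-- `des` of a path: the number of valleys. -/
def desPath {m : ℕ} (P : Fin m → Bool) : ℕ := (Valleys P).card

/-- `maj` of a path: the sum of the (1-based) positions of the descents. -/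
def majPath {m : ℕ} (P : Fin m → Bool) : ℕ := ∑ j ∈ Valleys P, (j.val + 1)

/-- `α(P) = Σ_{i ∈ Des P} |p_i(P)|_U`. -/
def alphaPath {m : ℕ} (P : Fin m → Bool) : ℕ := ∑ j ∈ Valleys P, UpCt P (j.val + 1)

/-- `β(P) = Σ_{i ∈ Des P} |p_i(P)|_D`. -/
def betaPath {m : ℕ} (P : Fin m → Bool) : ℕ := ∑ j ∈ Valleys P, DownCt P (j.val + 1)

/-- Peaks (factors `UD`), recorded by the 0-based index of the `U` step. -/
def Peaks {m : ℕ} (P : Fin m → Bool) : Finset (Fin m) :=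
  univ.filter (fun j => P j = true ∧ ∃ h : j.val + 1 < m, P ⟨j.val + 1, h⟩ = false)

/-- The number of peaks of `P`. -/
def npea {m : ℕ} (P : Fin m → Bool) : ℕ := (Peaks P).card

/-- `spea P = Σ_p (HT(p) - 1)` over peaks `p`, where `HT` is the height of a peak. -/
def spea {m : ℕ} (P : Fin m → Bool) : ℕ :=
  ∑ j ∈ Peaks P, (UpCt P (j.val + 1) - DownCt P (j.val + 1) - 1)

/-- The height of the path after `i` steps. -/
def htAt {m : ℕ} (P : Fin m → Bool) (i : ℕ) : ℤ := (UpCt P i : ℤ) - (DownCt P i : ℤ)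

/-- The start of the tunnel of the valley whose lowest lattice point comes after
`k` steps: the largest `m < k` at which the path has the same height. -/
def tunnelStart {m : ℕ} (P : Fin m → Bool) (k : ℕ) : ℕ :=
  ((Finset.range k).filter (fun j => htAt P j = htAt P k)).sup id

/-- `stun P`: the sum over all valleys of the semilengths of their tunnels. -/
def stun {m : ℕ} (P : Fin m → Bool) : ℕ :=
  ∑ j ∈ Valleys P, (j.val + 1 - tunnelStart P (j.val + 1)) / 2

/-- A parallelogram polyomino: a pair `(U,V)` of `N/E`-paths (`true` = N, `false` = E)
of the same length, with the same endpoints, such that `U` stays strictly above `V`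
except at the endpoints (i.e. every proper nonempty prefix of `U` contains strictly
more `N`-steps than the corresponding prefix of `V`).  As noted by Fürlinger and
Hofbauer, the lower path begins with an `E`-step and the upper path ends with an
`E`-step; this is automatic for `m ≥ 2` and fixes the convention in the degenerate
case `m = 1`. -/
def IsParaPoly {m : ℕ} (U V : Fin m → Bool) : Prop :=
  UpCt U m = UpCt V m ∧ (∀ i, i < m → 1 ≤ i → UpCt V i < UpCt U i) ∧
    UpCt V 1 = 0 ∧ UpCt U m = UpCt U (m - 1)

instance {m : ℕ} (U V : Fin m → Bool) : Decidable (IsParaPoly U V) := by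
  unfold IsParaPoly; infer_instance

/-- The parallelogram polyominoes of size `n`. -/
def ParaSet (n : ℕ) : Finset ((Fin n → Bool) × (Fin n → Bool)) :=
  univ.filter (fun UV => IsParaPoly UV.1 UV.2)

/-- A shortened polyomino: a pair `(P,Q)` of `N/E`-paths of the same length with the
same endpoints such that `P` stays weakly above `Q` and the two paths share no
`N`-steps (an `N`-step is shared exactly when it occurs at the same index with equal
prefix `N`-counts). -/
def IsShortPoly {m : ℕ} (P Q : Fin m → Bool) : Prop :=
  UpCt P m = UpCt Q m ∧ (∀ i, i ≤ m → UpCt Q i ≤ UpCt P i) ∧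
    ∀ j : Fin m, UpCt P j.val = UpCt Q j.val → ¬(P j = true ∧ Q j = true)

instance {m : ℕ} (P Q : Fin m → Bool) : Decidable (IsShortPoly P Q) := by
  unfold IsShortPoly; infer_instance

/-- The shortened polyominoes of size `n`. -/
def ShortSet (n : ℕ) : Finset ((Fin n → Bool) × (Fin n → Bool)) :=
  univ.filter (fun PQ => IsShortPoly PQ.1 PQ.2)

/-- The sum, over the `E`-steps of a path, of their heights (`N`-count before the step). -/
def eSum {m : ℕ} (W : Fin m → Bool) : ℕ :=
  ∑ j ∈ univ.filter (fun j : Fin m => W j = false), UpCt W j.val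

/-- The area between the upper path `U` and the lower path `V`. -/
def areaPoly {m : ℕ} (U V : Fin m → Bool) : ℕ := eSum U - eSum V

/-- The number of columns spanned: the number of `E`-steps of the path. -/
def colPoly {m : ℕ} (W : Fin m → Bool) : ℕ := (univ.filter (fun j : Fin m => W j = false)).card

/-- `I_n(q,t) = Σ_{σ ∈ Av_n(321)} q^{inv σ} t^{lrm σ}`, with `q = X 0`, `t = X 1`. -/
noncomputable def IPoly (n : ℕ) : MvPolynomial (Fin 2) ℤ :=
  ∑ σ ∈ Av n, X 0 ^ invPerm σ * X 1 ^ lrm σ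

/-- `M_n(q,t) = Σ_{σ ∈ Av_n(321)} q^{maj σ} t^{des σ}`, with `q = X 0`, `t = X 1`. -/
noncomputable def MPoly (n : ℕ) : MvPolynomial (Fin 2) ℤ :=
  ∑ σ ∈ Av n, X 0 ^ majPerm σ * X 1 ^ desPerm σ

/-- `I_n(q,t,x) = Σ_{σ ∈ Av_n(321)} q^{inv σ} t^{lrm σ} x^{fix σ}`,
with `q = X 0`, `t = X 1`, `x = X 2`. -/
noncomputable def IPoly3 (n : ℕ) : MvPolynomial (Fin 3) ℤ :=
  ∑ σ ∈ Av n, X 0 ^ invPerm σ * X 1 ^ lrm σ * X 2 ^ fixPerm σ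

/-- `C_n(a,b;t) = Σ_{P ∈ D_n} a^{α(P)} b^{β(P)} t^{des P}`,
with `a = X 0`, `b = X 1`, `t = X 2`. -/
noncomputable def CPoly (n : ℕ) : MvPolynomial (Fin 3) ℤ :=
  ∑ P ∈ DyckSet n, X 0 ^ alphaPath P * X 1 ^ betaPath P * X 2 ^ desPath P

/-- `P_n(q,t) = Σ_{(U,V) ∈ 𝒫_n} q^{area(U,V)} t^{col(U,V)}`, with `q = X 0`, `t = X 1`. -/
noncomputable def PPoly (n : ℕ) : MvPolynomial (Fin 2) ℤ :=
  ∑ UV ∈ ParaSet n, X 0 ^ areaPoly UV.1 UV.2 * X 1 ^ colPoly UV.1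

/-- `I_n(-1,t) = Σ_{σ ∈ Av_n(321)} (-1)^{inv σ} t^{lrm σ} ∈ ℤ[t]`. -/
noncomputable def ISign (n : ℕ) : Polynomial ℤ :=
  ∑ σ ∈ Av n, Polynomial.C ((-1 : ℤ) ^ invPerm σ) * Polynomial.X ^ lrm σ

/-- Substitution `t ↦ q^k t` for polynomials in `q = X 0`, `t = X 1`. -/
noncomputable def subT (k : ℕ) (f : MvPolynomial (Fin 2) ℤ) : MvPolynomial (Fin 2) ℤ :=
  bind₁ (fun i : Fin 2 => if i = 0 then X 0 else X 0 ^ k * X 1) f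

/-- Substitution `t ↦ u` (third variable) for polynomials in `a = X 0`, `b = X 1`, `t = X 2`. -/
noncomputable def subT3 (u : MvPolynomial (Fin 3) ℤ) (f : MvPolynomial (Fin 3) ℤ) :
    MvPolynomial (Fin 3) ℤ :=
  bind₁ (fun i : Fin 3 => if i = 2 then u else X i) f

/-- Substitution `x ↦ 1` (third variable) for polynomials in `q = X 0`, `t = X 1`, `x = X 2`. -/
noncomputable def subX1 (f : MvPolynomial (Fin 3) ℤ) : MvPolynomial (Fin 3) ℤ :=
  bind₁ (fun i : Fin 3 => if i = 2 then 1 else X i) f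

/-- `val σ`: indicator vector of left-right maximum values (`val σ i = 1` iff the value `i`
occurs at a left-right maximum position of `σ`). -/
def valVec {n : ℕ} (σ : Equiv.Perm (Fin n)) (i : Fin n) : ℕ :=
  if ∃ j, IsLRMax σ j ∧ σ j = i then 1 else 0

/-- `pos σ`: indicator vector of left-right maximum positions. -/
def posVec {n : ℕ} (σ : Equiv.Perm (Fin n)) (i : Fin n) : ℕ :=
  if IsLRMax σ i then 1 else 0


namespace Stmt8Aux

variable {n : ℕ}

/-- count of elements of `A` with value `< m` -/
def cnt (A : Finset (Fin n)) (m : ℕ) : ℕ := (A.filter (fun j : Fin n => (j : ℕ) < m)).card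

lemma cardLT {m : ℕ} (hm : m ≤ n) :
    ((univ : Finset (Fin n)).filter (fun j : Fin n => (j : ℕ) < m)).card = m := by
  have h := Finset.card_bij
    (s := Finset.range m) (t := (univ : Finset (Fin n)).filter (fun j : Fin n => (j : ℕ) < m))
    (fun b hb => (⟨b, lt_of_lt_of_le (Finset.mem_range.mp hb) hm⟩ : Fin n))
    (by intro a ha; simp [Finset.mem_range.mp ha])
    (by intro a ha b hb hab; simpa using congrArg Fin.val hab)
    (by intro j hj; exact ⟨(j : ℕ), Finset.mem_range.mpr (Finset.mem_filter.mp hj).2, by simp⟩)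
  simpa using h.symm

lemma cnt_mono (A : Finset (Fin n)) {m m' : ℕ} (h : m ≤ m') : cnt A m ≤ cnt A m' :=
  Finset.card_le_card (Finset.monotone_filter_right A (fun j hj => by omega))

lemma cnt_le (A : Finset (Fin n)) {m : ℕ} (hm : m ≤ n) : cnt A m ≤ m := by
  have h1 : cnt A m ≤ ((univ : Finset (Fin n)).filter (fun j : Fin n => (j : ℕ) < m)).card :=
    Finset.card_le_card (Finset.filter_subset_filter _ (Finset.subset_univ A))
  rw [cardLT hm] at h1
  exact h1

lemma cnt_card (A : Finset (Fin n)) : cnt A n = A.card := by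
  unfold cnt
  rw [Finset.filter_true_of_mem (fun j _ => j.isLt)]

lemma cnt_compl (A : Finset (Fin n)) {m : ℕ} (hm : m ≤ n) : cnt A m + cnt Aᶜ m = m := by
  classical
  have h := Finset.card_filter_add_card_filter_not
    (s := (univ : Finset (Fin n)).filter (fun j : Fin n => (j : ℕ) < m)) (p := fun j => j ∈ A)
  rw [Finset.filter_filter, Finset.filter_filter, cardLT hm] at h
  have e1 : (univ.filter (fun j : Fin n => (j : ℕ) < m ∧ j ∈ A)) = A.filter (fun j : Fin n => (j : ℕ) < m) := by
    ext j; simp [and_comm]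
  have e2 : (univ.filter (fun j : Fin n => (j : ℕ) < m ∧ ¬ j ∈ A)) = Aᶜ.filter (fun j : Fin n => (j : ℕ) < m) := by
    ext j; simp [and_comm]
  rw [e1, e2] at h
  exact h

lemma cnt_succ_mem {A : Finset (Fin n)} {a : Fin n} (ha : a ∈ A) :
    cnt A ((a : ℕ) + 1) = cnt A (a : ℕ) + 1 := by
  unfold cnt
  have e : A.filter (fun j : Fin n => (j : ℕ) < (a : ℕ) + 1)
      = insert a (A.filter (fun j : Fin n => (j : ℕ) < (a : ℕ))) := by
    ext j
    simp only [Finset.mem_filter, Finset.mem_insert]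
    constructor
    · rintro ⟨hj, hlt⟩
      rcases Nat.lt_succ_iff_lt_or_eq.mp hlt with h | h
      · exact Or.inr ⟨hj, h⟩
      · exact Or.inl (Fin.ext h)
    · rintro (rfl | ⟨hj, hlt⟩)
      · exact ⟨ha, Nat.lt_succ_self _⟩
      · exact ⟨hj, by omega⟩
  rw [e, Finset.card_insert_of_notMem (by simp)]

lemma cnt_succ_not_mem {A : Finset (Fin n)} {a : Fin n} (ha : a ∉ A) :
    cnt A ((a : ℕ) + 1) = cnt A (a : ℕ) := by
  unfold cnt
  congr 1
  ext j
  simp only [Finset.mem_filter]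
  constructor
  · rintro ⟨hj, hlt⟩
    refine ⟨hj, ?_⟩
    have : j ≠ a := by rintro rfl; exact ha hj
    have : (j : ℕ) ≠ (a : ℕ) := fun h => this (Fin.ext h)
    omega
  · rintro ⟨hj, hlt⟩; exact ⟨hj, by omega⟩

lemma cnt_lt_of_mem {A : Finset (Fin n)} {a : Fin n} {m : ℕ} (ha : a ∈ A) (h : (a : ℕ) < m) :
    cnt A (a : ℕ) < cnt A m := by
  have h1 := cnt_succ_mem ha
  have h2 := cnt_mono A (show (a : ℕ) + 1 ≤ m by omega)
  omega

lemma lt_of_cnt_lt {A : Finset (Fin n)} {a b : Fin n} (ha : a ∈ A) (hb : b ∈ A)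
    (h : cnt A (a : ℕ) < cnt A (b : ℕ)) : a < b := by
  rcases lt_trichotomy a b with hlt | rfl | hgt
  · exact hlt
  · omega
  · exact absurd (cnt_lt_of_mem hb (Fin.lt_def.mp hgt)) (by omega)

lemma cnt_inj {A : Finset (Fin n)} {a b : Fin n} (ha : a ∈ A) (hb : b ∈ A)
    (h : cnt A (a : ℕ) = cnt A (b : ℕ)) : a = b := by
  rcases lt_trichotomy a b with hlt | heq | hgt
  · exact absurd (cnt_lt_of_mem ha (Fin.lt_def.mp hlt)) (by omega)
  · exact heq
  · exact absurd (cnt_lt_of_mem hb (Fin.lt_def.mp hgt)) (by omega)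

lemma enum_cnt {A : Finset (Fin n)} {k : ℕ} (f : Fin k ≃o {x // x ∈ A}) (i : Fin k) :
    cnt A ((f i : Fin n) : ℕ) = (i : ℕ) := by
  unfold cnt
  have h := Finset.card_bij
    (s := (univ : Finset (Fin k)).filter (fun j : Fin k => (j : ℕ) < (i : ℕ)))
    (t := A.filter (fun j : Fin n => (j : ℕ) < ((f i : Fin n) : ℕ)))
    (fun j _ => (f j : Fin n))
    (by
      intro j hj
      simp only [Finset.mem_filter, Finset.mem_univ, true_and] at hj ⊢
      refine ⟨(f j).2, ?_⟩
      have : f j < f i := f.strictMono (Fin.lt_def.mpr hj)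
      exact this
      )
    (by
      intro a _ b _ hab
      exact f.injective (Subtype.ext hab))
    (by
      intro b hb
      simp only [Finset.mem_filter] at hb
      refine ⟨f.symm ⟨b, hb.1⟩, ?_, by simp⟩
      simp only [Finset.mem_filter, Finset.mem_univ, true_and]
      have : f (f.symm ⟨b, hb.1⟩) < f i := by
        rw [f.apply_symm_apply]
        exact Subtype.mk_lt_mk.mpr (Fin.lt_def.mpr hb.2)
      exact Fin.lt_def.mp (f.lt_iff_lt.mp this))
  rw [← h]
  exact cardLT i.isLt.le

lemma enum_symm {A : Finset (Fin n)} {k : ℕ} (f : Fin k ≃o {x // x ∈ A}) {a : Fin n}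
    (ha : a ∈ A) : ((f.symm ⟨a, ha⟩ : Fin k) : ℕ) = cnt A (a : ℕ) := by
  have h := enum_cnt f (f.symm ⟨a, ha⟩)
  rw [f.apply_symm_apply] at h
  exact h.symm

section Build

variable (S T : Finset (Fin n))

lemma compl_card (hcard : S.card = T.card) : Tᶜ.card = Sᶜ.card := by
  rw [Finset.card_compl, Finset.card_compl, hcard]

/-- The permutation sending the `i`-th element of `S` to the `i`-th element of `T`
and the `i`-th element of `Sᶜ` to the `i`-th element of `Tᶜ`. -/
noncomputable def buildPerm (hcard : S.card = T.card) : Equiv.Perm (Fin n) :=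
  (Equiv.sumCompl (· ∈ S)).symm.trans
    ((Equiv.sumCongr
        ((S.orderIsoOfFin rfl).symm.toEquiv.trans (T.orderIsoOfFin hcard.symm).toEquiv)
        ((Equiv.subtypeEquivRight (fun a => (Finset.mem_compl (s := S) (a := a)).symm)).trans
          (((Sᶜ.orderIsoOfFin rfl).symm.toEquiv.trans
            ((Tᶜ.orderIsoOfFin (compl_card S T hcard)).toEquiv)).trans
            (Equiv.subtypeEquivRight (fun a => Finset.mem_compl))))).trans
      (Equiv.sumCompl (· ∈ T)))

lemma buildPerm_apply_of_mem (hcard : S.card = T.card) {a : Fin n} (ha : a ∈ S) :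
    buildPerm S T hcard a
      = ((T.orderIsoOfFin hcard.symm) ((S.orderIsoOfFin rfl).symm ⟨a, ha⟩) : Fin n) := by
  simp [buildPerm, Equiv.sumCompl_symm_apply_of_pos ha]

lemma buildPerm_apply_of_not_mem (hcard : S.card = T.card) {a : Fin n} (ha : a ∉ S) :
    buildPerm S T hcard a
      = ((Tᶜ.orderIsoOfFin (compl_card S T hcard))
          ((Sᶜ.orderIsoOfFin rfl).symm ⟨a, Finset.mem_compl.mpr ha⟩) : Fin n) := by
  simp [buildPerm, Equiv.sumCompl_symm_apply_of_neg ha, Equiv.subtypeEquivRight,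
    Subtype.ext_iff]
  rfl

lemma buildPerm_mem (hcard : S.card = T.card) {a : Fin n} (ha : a ∈ S) : buildPerm S T hcard a ∈ T := by
  rw [buildPerm_apply_of_mem S T hcard ha]
  exact Subtype.mem _

lemma buildPerm_cnt (hcard : S.card = T.card) {a : Fin n} (ha : a ∈ S) :
    cnt T ((buildPerm S T hcard a : Fin n) : ℕ) = cnt S (a : ℕ) := by
  rw [buildPerm_apply_of_mem S T hcard ha, enum_cnt (T.orderIsoOfFin hcard.symm),
    enum_symm (S.orderIsoOfFin rfl) ha]

lemma buildPerm_not_mem (hcard : S.card = T.card) {a : Fin n} (ha : a ∉ S) : buildPerm S T hcard a ∉ T := by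
  rw [buildPerm_apply_of_not_mem S T hcard ha]
  exact Finset.mem_compl.mp (Subtype.mem _)

lemma buildPerm_cnt' (hcard : S.card = T.card) {a : Fin n} (ha : a ∉ S) :
    cnt Tᶜ ((buildPerm S T hcard a : Fin n) : ℕ) = cnt Sᶜ (a : ℕ) := by
  rw [buildPerm_apply_of_not_mem S T hcard ha, enum_cnt (Tᶜ.orderIsoOfFin (compl_card S T hcard)),
    enum_symm (Sᶜ.orderIsoOfFin rfl) (Finset.mem_compl.mpr ha)]

end Build
section Main

variable {S T : Finset (Fin n)} (hcard : S.card = T.card)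
  (hle : ∀ m : ℕ, m ≤ n → cnt T m ≤ cnt S m)
  (hstrict : ∀ a : Fin n, a ∉ S → cnt T (a : ℕ) < cnt S (a : ℕ))

include hcard

include hle in
lemma le_apply_of_mem {a : Fin n} (ha : a ∈ S) :
    (a : ℕ) ≤ ((buildPerm S T hcard a : Fin n) : ℕ) := by
  by_contra hcon
  push_neg at hcon
  have h1 := buildPerm_mem S T hcard ha
  have h2 := buildPerm_cnt S T hcard ha
  have h3 := cnt_lt_of_mem h1 hcon
  have h4 := hle (a : ℕ) a.isLt.le
  omega

lemma mono_mem {a b : Fin n} (ha : a ∈ S) (hb : b ∈ S) (hab : a < b) :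
    buildPerm S T hcard a < buildPerm S T hcard b := by
  have h := cnt_lt_of_mem ha (Fin.lt_def.mp hab)
  refine lt_of_cnt_lt (buildPerm_mem S T hcard ha) (buildPerm_mem S T hcard hb) ?_
  rw [buildPerm_cnt S T hcard ha, buildPerm_cnt S T hcard hb]
  exact h

lemma mono_not_mem {a b : Fin n} (ha : a ∉ S) (hb : b ∉ S) (hab : a < b) :
    buildPerm S T hcard a < buildPerm S T hcard b := by
  have h := cnt_lt_of_mem (Finset.mem_compl.mpr ha) (Fin.lt_def.mp hab)
  refine lt_of_cnt_lt (A := Tᶜ) (Finset.mem_compl.mpr (buildPerm_not_mem S T hcard ha))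
    (Finset.mem_compl.mpr (buildPerm_not_mem S T hcard hb)) ?_
  rw [buildPerm_cnt' S T hcard ha, buildPerm_cnt' S T hcard hb]
  exact h

lemma build_avoids : Avoids321 (buildPerm S T hcard) := by
  rintro ⟨i, j, k, hij, hjk, h1, h2⟩
  by_cases hiS : i ∈ S
  · by_cases hjS : j ∈ S
    · exact lt_asymm (mono_mem hcard hiS hjS hij) h2
    · by_cases hkS : k ∈ S
      · exact lt_asymm (mono_mem hcard hiS hkS (lt_trans hij hjk)) (lt_trans h1 h2)
      · exact lt_asymm (mono_not_mem hcard hjS hkS hjk) h1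
  · by_cases hjS : j ∈ S
    · by_cases hkS : k ∈ S
      · exact lt_asymm (mono_mem hcard hjS hkS hjk) h1
      · exact lt_asymm (mono_not_mem hcard hiS hkS (lt_trans hij hjk)) (lt_trans h1 h2)
    · exact lt_asymm (mono_not_mem hcard hiS hjS hij) h2

include hle in
lemma build_isLRMax {a : Fin n} (ha : a ∈ S) : IsLRMax (buildPerm S T hcard) a := by
  intro j hj
  set σ := buildPerm S T hcard with hσ
  rcases eq_or_lt_of_le hj with rfl | hja
  · exact le_refl _
  · by_cases hjS : j ∈ S
    · exact le_of_lt (mono_mem hcard hjS ha hja)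
    · by_contra hcon
      push_neg at hcon
      -- hcon : σ a < σ j
      have h1 : σ j ∉ T := buildPerm_not_mem S T hcard hjS
      have h2 : cnt Tᶜ ((σ j : Fin n) : ℕ) = cnt Sᶜ (j : ℕ) := buildPerm_cnt' S T hcard hjS
      have h3 : σ a ∈ T := buildPerm_mem S T hcard ha
      have h4 : cnt T ((σ a : Fin n) : ℕ) = cnt S (a : ℕ) := buildPerm_cnt S T hcard ha
      have h5 : (a : ℕ) ≤ ((σ a : Fin n) : ℕ) := le_apply_of_mem hcard hle ha
      have h6 : cnt T ((σ a : Fin n) : ℕ) + cnt Tᶜ ((σ a : Fin n) : ℕ) = ((σ a : Fin n) : ℕ) :=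
        cnt_compl T (σ a).isLt.le
      have h7 : cnt Tᶜ (((σ a : Fin n) : ℕ) + 1) = cnt Tᶜ ((σ a : Fin n) : ℕ) :=
        cnt_succ_not_mem (by simpa using h3)
      have h8 : cnt Tᶜ (((σ a : Fin n) : ℕ) + 1) ≤ cnt Tᶜ ((σ j : Fin n) : ℕ) :=
        cnt_mono Tᶜ (by exact Fin.lt_def.mp hcon)
      have h9 : cnt Sᶜ ((j : ℕ) + 1) = cnt Sᶜ (j : ℕ) + 1 :=
        cnt_succ_mem (Finset.mem_compl.mpr hjS)
      have h10 : cnt Sᶜ ((j : ℕ) + 1) ≤ cnt Sᶜ (a : ℕ) := cnt_mono Sᶜ (Fin.lt_def.mp hja)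
      have h11 : cnt S (a : ℕ) + cnt Sᶜ (a : ℕ) = (a : ℕ) := cnt_compl S a.isLt.le
      omega

include hle hstrict in
lemma build_not_isLRMax {a : Fin n} (ha : a ∉ S) : ¬ IsLRMax (buildPerm S T hcard) a := by
  intro hmax
  set σ := buildPerm S T hcard with hσ
  have h0 : cnt T (a : ℕ) < cnt S (a : ℕ) := hstrict a ha
  have hne : (S.filter (fun j : Fin n => (j : ℕ) < (a : ℕ))).Nonempty := by
    rw [← Finset.card_pos]
    have : 0 < cnt S (a : ℕ) := by omega
    exact this
  set s := (S.filter (fun j : Fin n => (j : ℕ) < (a : ℕ))).max' hne with hs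
  have hsmem := Finset.max'_mem _ hne
  rw [Finset.mem_filter] at hsmem
  obtain ⟨hsS, hsa⟩ := hsmem
  have hsup : ∀ j ∈ S, (j : ℕ) < (a : ℕ) → j ≤ s := by
    intro j hj hja
    exact Finset.le_max' _ j (Finset.mem_filter.mpr ⟨hj, hja⟩)
  have e1 : cnt S ((s : ℕ) + 1) = cnt S (a : ℕ) := by
    refine le_antisymm (cnt_mono S (by omega)) (Finset.card_le_card ?_)
    intro j hj
    rw [Finset.mem_filter] at hj ⊢
    have := hsup j hj.1 hj.2
    exact ⟨hj.1, by have := Fin.le_def.mp this; omega⟩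
  have e2 : cnt S ((s : ℕ) + 1) = cnt S (s : ℕ) + 1 := cnt_succ_mem hsS
  have h4 : cnt T ((σ s : Fin n) : ℕ) = cnt S (s : ℕ) := buildPerm_cnt S T hcard hsS
  have hσs : σ s ∈ T := buildPerm_mem S T hcard hsS
  have h5 : (a : ℕ) ≤ ((σ s : Fin n) : ℕ) := by
    by_contra h
    push_neg at h
    have := cnt_lt_of_mem hσs h
    omega
  have h6 : σ a ∉ T := buildPerm_not_mem S T hcard ha
  have h7 : cnt Tᶜ ((σ a : Fin n) : ℕ) = cnt Sᶜ (a : ℕ) := buildPerm_cnt' S T hcard ha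
  have hc1 : cnt S (a : ℕ) + cnt Sᶜ (a : ℕ) = (a : ℕ) := cnt_compl S a.isLt.le
  have hss : σ s ≤ σ a := hmax s (le_of_lt (Fin.lt_def.mpr hsa))
  have hne2 : σ s ≠ σ a := fun h => h6 (h ▸ hσs)
  have hlt2 : ((σ s : Fin n) : ℕ) < ((σ a : Fin n) : ℕ) :=
    Fin.lt_def.mp (lt_of_le_of_ne hss hne2)
  have h8 : cnt Tᶜ (((σ s : Fin n) : ℕ) + 1) = cnt Tᶜ ((σ s : Fin n) : ℕ) :=
    cnt_succ_not_mem (by simpa using hσs)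
  have h9 : cnt Tᶜ (((σ s : Fin n) : ℕ) + 1) ≤ cnt Tᶜ ((σ a : Fin n) : ℕ) :=
    cnt_mono Tᶜ (by omega)
  have h10 : cnt T ((σ s : Fin n) : ℕ) + cnt Tᶜ ((σ s : Fin n) : ℕ) = ((σ s : Fin n) : ℕ) :=
    cnt_compl T (σ s).isLt.le
  omega

include hle hstrict in
lemma build_lrmax_filter : univ.filter (IsLRMax (buildPerm S T hcard)) = S := by
  ext a
  simp only [Finset.mem_filter, Finset.mem_univ, true_and]
  constructor
  · intro h
    by_contra haS
    exact build_not_isLRMax hcard hle hstrict haS h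
  · exact build_isLRMax hcard hle

lemma build_image : S.image (buildPerm S T hcard) = T := by
  refine Finset.eq_of_subset_of_card_le ?_ ?_
  · intro v hv
    rw [Finset.mem_image] at hv
    obtain ⟨a, ha, rfl⟩ := hv
    exact buildPerm_mem S T hcard ha
  · rw [Finset.card_image_of_injective S (buildPerm S T hcard).injective, hcard]

end Main
section Inv

lemma card_lt_fin (a : Fin n) :
    ((univ : Finset (Fin n)).filter (fun j => j < a)).card = (a : ℕ) := by
  have e : ((univ : Finset (Fin n)).filter (fun j => j < a))
      = (univ : Finset (Fin n)).filter (fun j : Fin n => (j : ℕ) < (a : ℕ)) := by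
    ext j
    simp only [Finset.mem_filter, Finset.mem_univ, true_and, Fin.lt_def]
  rw [e, cardLT (n := n) a.isLt.le]

lemma card_sigma_lt (σ : Equiv.Perm (Fin n)) (a : Fin n) :
    ((univ : Finset (Fin n)).filter (fun j => σ j < σ a)).card = ((σ a : Fin n) : ℕ) := by
  rw [← card_lt_fin (σ a)]
  apply Finset.card_nbij' σ σ.symm
  · intro j hj
    simp only [Finset.mem_coe, Finset.mem_filter, Finset.mem_univ, true_and] at hj ⊢
    exact hj
  · intro v hv
    simp only [Finset.mem_coe, Finset.mem_filter, Finset.mem_univ, true_and] at hv ⊢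
    rwa [Equiv.apply_symm_apply]
  · intro j _; exact Equiv.symm_apply_apply σ j
  · intro v _; exact Equiv.apply_symm_apply σ v

lemma inv_card_mem (σ : Equiv.Perm (Fin n)) {a : Fin n} (hmax : IsLRMax σ a) :
    ((univ : Finset (Fin n)).filter (fun j => a < j ∧ σ j < σ a)).card
      = ((σ a : Fin n) : ℕ) - (a : ℕ) := by
  have hsplit := Finset.card_filter_add_card_filter_not
    (s := (univ : Finset (Fin n)).filter (fun j => σ j < σ a)) (p := fun j => a < j)
  rw [Finset.filter_filter, Finset.filter_filter] at hsplit
  have e1 : (univ : Finset (Fin n)).filter (fun j => σ j < σ a ∧ a < j)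
      = (univ : Finset (Fin n)).filter (fun j => a < j ∧ σ j < σ a) := by
    ext j; simp [and_comm]
  have e2 : (univ : Finset (Fin n)).filter (fun j => σ j < σ a ∧ ¬ a < j)
      = (univ : Finset (Fin n)).filter (fun j => j < a) := by
    ext j
    simp only [Finset.mem_filter, Finset.mem_univ, true_and, not_lt]
    constructor
    · rintro ⟨h1, h2⟩
      refine lt_of_le_of_ne h2 ?_
      rintro rfl; exact lt_irrefl _ h1
    · intro hja
      refine ⟨lt_of_le_of_ne (hmax j (le_of_lt hja)) (fun he => ?_), le_of_lt hja⟩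
      exact absurd (σ.injective he) (ne_of_lt hja)
  rw [e1, e2, card_lt_fin, card_sigma_lt] at hsplit
  omega

lemma inv_card_not_mem (σ : Equiv.Perm (Fin n)) (hAv : Avoids321 σ) {a : Fin n}
    (hnm : ¬ IsLRMax σ a) :
    (univ : Finset (Fin n)).filter (fun j => a < j ∧ σ j < σ a) = ∅ := by
  rw [Finset.filter_eq_empty_iff]
  rintro j - ⟨h1, h2⟩
  unfold IsLRMax at hnm
  push_neg at hnm
  obtain ⟨i, hi, hlt⟩ := hnm
  have hia : i < a := lt_of_le_of_ne hi (by rintro rfl; exact absurd hlt (lt_irrefl _))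
  exact hAv ⟨i, a, j, hia, h1, h2, hlt⟩

lemma inv_eq_sum (σ : Equiv.Perm (Fin n)) (hAv : Avoids321 σ) (S : Finset (Fin n))
    (hmaxiff : ∀ a : Fin n, IsLRMax σ a ↔ a ∈ S) :
    invPerm σ = ∑ a ∈ S, (((σ a : Fin n) : ℕ) - (a : ℕ)) := by
  unfold invPerm
  rw [Finset.card_eq_sum_card_fiberwise (f := Prod.fst) (t := univ) (fun x _ => mem_univ _)]
  have step : ∀ a : Fin n,
      (((univ : Finset (Fin n × Fin n)).filter
          (fun p : Fin n × Fin n => p.1 < p.2 ∧ σ p.2 < σ p.1)).filter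
            (fun p => p.1 = a)).card
      = ((univ : Finset (Fin n)).filter (fun j : Fin n => a < j ∧ σ j < σ a)).card := by
    intro a
    apply Finset.card_nbij' (fun p => p.2) (fun j => (a, j))
    · intro p hp
      simp only [Finset.mem_coe, Finset.mem_filter, Finset.mem_univ, true_and] at hp ⊢
      obtain ⟨⟨hp1, hp2⟩, hpa⟩ := hp
      rw [← hpa]
      exact ⟨hp1, hp2⟩
    · intro j hj
      simp only [Finset.mem_coe, Finset.mem_filter, Finset.mem_univ, true_and] at hj ⊢
      exact ⟨⟨hj.1, hj.2⟩, trivial⟩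
    · intro p hp
      simp only [Finset.mem_coe, Finset.mem_filter, Finset.mem_univ, true_and] at hp
      rw [← hp.2]
    · intro j _; rfl
  rw [Finset.sum_congr rfl (fun a _ => step a)]
  rw [← Finset.sum_subset (Finset.subset_univ S) (fun a _ haS => by
    rw [inv_card_not_mem σ hAv (fun h => haS ((hmaxiff a).mp h)), Finset.card_empty])]
  exact Finset.sum_congr rfl (fun a ha => inv_card_mem σ ((hmaxiff a).mpr ha))

end Inv

section Translate

/-- The set of `E`-steps (`false` letters) of a path. -/
def falseSet (W : Fin n → Bool) : Finset (Fin n) := univ.filter (fun j => W j = false)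

lemma upCt_add_cnt (W : Fin n → Bool) {m : ℕ} (hm : m ≤ n) :
    UpCt W m + cnt (falseSet W) m = m := by
  classical
  have h := Finset.card_filter_add_card_filter_not
    (s := (univ : Finset (Fin n)).filter (fun j : Fin n => (j : ℕ) < m))
    (p := fun j => W j = true)
  rw [Finset.filter_filter, Finset.filter_filter, cardLT hm] at h
  have e2 : (univ : Finset (Fin n)).filter (fun j : Fin n => (j : ℕ) < m ∧ ¬ W j = true)
      = (falseSet W).filter (fun j : Fin n => (j : ℕ) < m) := by
    ext j; simp [falseSet, and_comm]
  rw [e2] at h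
  exact h

lemma falseSet_inj {W W' : Fin n → Bool} (h : falseSet W = falseSet W') : W = W' := by
  funext j
  have hmem : W j = false ↔ W' j = false := by
    constructor
    · intro hw
      have : j ∈ falseSet W := by simp [falseSet, hw]
      rw [h] at this
      simpa [falseSet] using this
    · intro hw
      have : j ∈ falseSet W' := by simp [falseSet, hw]
      rw [← h] at this
      simpa [falseSet] using this
  cases hW : W j <;> cases hW' : W' j
  · rfl
  · exact absurd (hmem.mp hW) (by simp [hW'])
  · exact absurd (hmem.mpr hW') (by simp [hW])
  · rfl

lemma eSum_eq (W : Fin n → Bool) :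
    eSum W = ∑ j ∈ falseSet W, ((j : ℕ) - cnt (falseSet W) (j : ℕ)) := by
  unfold eSum
  apply Finset.sum_congr rfl
  intro j _
  have := upCt_add_cnt W (le_of_lt j.isLt)
  omega

lemma short_card {P Q : Fin n → Bool} (h : IsShortPoly P Q) :
    (falseSet Q).card = (falseSet P).card := by
  have hP := upCt_add_cnt P (le_refl n)
  have hQ := upCt_add_cnt Q (le_refl n)
  rw [cnt_card] at hP hQ
  have h1 := h.1
  omega

lemma short_le {P Q : Fin n → Bool} (h : IsShortPoly P Q) :
    ∀ m : ℕ, m ≤ n → cnt (falseSet P) m ≤ cnt (falseSet Q) m := by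
  intro m hm
  have hP := upCt_add_cnt P hm
  have hQ := upCt_add_cnt Q hm
  have h2 := h.2.1 m hm
  omega

lemma short_strict {P Q : Fin n → Bool} (h : IsShortPoly P Q) :
    ∀ a : Fin n, a ∉ falseSet Q → cnt (falseSet P) (a : ℕ) < cnt (falseSet Q) (a : ℕ) := by
  intro a haS
  have hQa : Q a = true := by simpa [falseSet] using haS
  by_cases haT : a ∈ falseSet P
  · have h1 : cnt (falseSet P) ((a : ℕ) + 1) = cnt (falseSet P) (a : ℕ) + 1 := cnt_succ_mem haT
    have h2 : cnt (falseSet Q) ((a : ℕ) + 1) = cnt (falseSet Q) (a : ℕ) := cnt_succ_not_mem haS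
    have h3 := short_le h ((a : ℕ) + 1) a.isLt
    omega
  · have hPa : P a = true := by simpa [falseSet] using haT
    have hne : UpCt P (a : ℕ) ≠ UpCt Q (a : ℕ) := fun he => h.2.2 a he ⟨hPa, hQa⟩
    have hP := upCt_add_cnt P a.isLt.le
    have hQ := upCt_add_cnt Q a.isLt.le
    have hle' := short_le h (a : ℕ) a.isLt.le
    omega

end Translate

section Forward

variable (σ : Equiv.Perm (Fin n))

lemma lr_val_bound {a j : Fin n} (h : ∀ i : Fin n, i ≤ j → σ i ≤ σ a) :
    (j : ℕ) ≤ ((σ a : Fin n) : ℕ) := by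
  have hc := Finset.card_le_card_of_injOn σ
    (s := (univ : Finset (Fin n)).filter (fun i : Fin n => i ≤ j))
    (t := (univ : Finset (Fin n)).filter (fun v : Fin n => v ≤ σ a))
    (fun i hi => by
      simp only [Finset.mem_coe, Finset.mem_filter, Finset.mem_univ, true_and] at hi ⊢
      exact h i hi)
    (σ.injective.injOn)
  have e1 : ((univ : Finset (Fin n)).filter (fun i : Fin n => i ≤ j)).card = (j : ℕ) + 1 := by
    have e : ((univ : Finset (Fin n)).filter (fun i : Fin n => i ≤ j))
        = (univ : Finset (Fin n)).filter (fun i : Fin n => (i : ℕ) < (j : ℕ) + 1) := by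
      ext i
      simp only [Finset.mem_filter, Finset.mem_univ, true_and, Fin.le_def]
      omega
    rw [e, cardLT (n := n) j.isLt]
  have e2 : ((univ : Finset (Fin n)).filter (fun v : Fin n => v ≤ σ a)).card
      = ((σ a : Fin n) : ℕ) + 1 := by
    have e : ((univ : Finset (Fin n)).filter (fun v : Fin n => v ≤ σ a))
        = (univ : Finset (Fin n)).filter (fun v : Fin n => (v : ℕ) < ((σ a : Fin n) : ℕ) + 1) := by
      ext v
      simp only [Finset.mem_filter, Finset.mem_univ, true_and, Fin.le_def]
      omega
    rw [e, cardLT (n := n) (σ a).isLt]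
  omega

lemma not_lr_lt (hAv : Avoids321 σ) {a j : Fin n} (hnm : ¬ IsLRMax σ a) (haj : a < j) :
    σ a < σ j := by
  unfold IsLRMax at hnm
  push_neg at hnm
  obtain ⟨i, hi, hlt⟩ := hnm
  have hia : i < a := lt_of_le_of_ne hi (by rintro rfl; exact absurd hlt (lt_irrefl _))
  by_contra hc
  push_neg at hc
  have hne : σ j ≠ σ a := fun he => absurd (σ.injective he) (ne_of_gt haj)
  exact hAv ⟨i, a, j, hia, haj, lt_of_le_of_ne hc hne, hlt⟩

lemma exists_lr_dom (a : Fin n) : ∃ b, IsLRMax σ b ∧ b ≤ a ∧ ∀ i, i ≤ a → σ i ≤ σ b := by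
  obtain ⟨b, hb, hmax⟩ := Finset.exists_max_image
    ((univ : Finset (Fin n)).filter (fun i : Fin n => i ≤ a)) σ
    ⟨a, by simp⟩
  rw [Finset.mem_filter] at hb
  refine ⟨b, ?_, hb.2, fun i hi => hmax i (by simp [hi])⟩
  intro i hi
  exact hmax i (by simp [le_trans hi hb.2])

lemma mem_Tm {a : Fin n} (ha : IsLRMax σ a) :
    σ a ∈ ((univ : Finset (Fin n)).filter (IsLRMax σ)).image σ :=
  Finset.mem_image.mpr ⟨a, Finset.mem_filter.mpr ⟨Finset.mem_univ _, ha⟩, rfl⟩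

lemma not_mem_Tm {a : Fin n} (ha : ¬ IsLRMax σ a) :
    σ a ∉ ((univ : Finset (Fin n)).filter (IsLRMax σ)).image σ := by
  intro h
  obtain ⟨c, hc, hce⟩ := Finset.mem_image.mp h
  have : c = a := σ.injective hce
  exact ha (this ▸ (Finset.mem_filter.mp hc).2)

lemma forward_card :
    ((univ : Finset (Fin n)).filter (IsLRMax σ)).card
      = (((univ : Finset (Fin n)).filter (IsLRMax σ)).image σ).card :=
  (Finset.card_image_of_injective _ σ.injective).symm

lemma forward_le : ∀ m : ℕ, m ≤ n →
    cnt (((univ : Finset (Fin n)).filter (IsLRMax σ)).image σ) m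
      ≤ cnt ((univ : Finset (Fin n)).filter (IsLRMax σ)) m := by
  intro m _
  apply Finset.card_le_card_of_injOn σ.symm
  · intro v hv
    rw [Finset.mem_coe, Finset.mem_filter] at hv ⊢
    obtain ⟨hvT, hvm⟩ := hv
    obtain ⟨b, hb, rfl⟩ := Finset.mem_image.mp hvT
    rw [Equiv.symm_apply_apply]
    refine ⟨hb, ?_⟩
    have hmaxb : IsLRMax σ b := (Finset.mem_filter.mp hb).2
    have := lr_val_bound σ (a := b) (j := b) (fun i hi => hmaxb i hi)
    omega
  · exact σ.symm.injective.injOn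

lemma forward_strict : ∀ a : Fin n, a ∉ (univ : Finset (Fin n)).filter (IsLRMax σ) →
    cnt (((univ : Finset (Fin n)).filter (IsLRMax σ)).image σ) (a : ℕ)
      < cnt ((univ : Finset (Fin n)).filter (IsLRMax σ)) (a : ℕ) := by
  intro a ha
  set Sm := (univ : Finset (Fin n)).filter (IsLRMax σ) with hSm
  have hnm : ¬ IsLRMax σ a := fun h => ha (Finset.mem_filter.mpr ⟨Finset.mem_univ _, h⟩)
  obtain ⟨b, hbmax, hba, hdom⟩ := exists_lr_dom σ a
  have hbne : b ≠ a := fun he => hnm (he ▸ hbmax)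
  have hblt : b < a := lt_of_le_of_ne hba hbne
  have hσb : (a : ℕ) ≤ ((σ b : Fin n) : ℕ) := lr_val_bound σ hdom
  have hbfil : b ∈ Sm.filter (fun j : Fin n => (j : ℕ) < (a : ℕ)) :=
    Finset.mem_filter.mpr ⟨Finset.mem_filter.mpr ⟨Finset.mem_univ _, hbmax⟩, Fin.lt_def.mp hblt⟩
  have hcard : cnt (Sm.image σ) (a : ℕ)
      ≤ ((Sm.filter (fun j : Fin n => (j : ℕ) < (a : ℕ))).erase b).card := by
    apply Finset.card_le_card_of_injOn σ.symm
    · intro v hv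
      rw [Finset.mem_coe, Finset.mem_filter] at hv
      obtain ⟨hvT, hvm⟩ := hv
      obtain ⟨c, hc, rfl⟩ := Finset.mem_image.mp hvT
      rw [Equiv.symm_apply_apply, Finset.mem_coe, Finset.mem_erase]
      refine ⟨?_, Finset.mem_filter.mpr ⟨hc, ?_⟩⟩
      · rintro rfl
        omega
      · have hcm : IsLRMax σ c := (Finset.mem_filter.mp hc).2
        have := lr_val_bound σ (a := c) (j := c) (fun i hi => hcm i hi)
        omega
    · exact σ.symm.injective.injOn
  have herase : ((Sm.filter (fun j : Fin n => (j : ℕ) < (a : ℕ))).erase b).card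
      = cnt Sm (a : ℕ) - 1 := Finset.card_erase_of_mem hbfil
  have hpos : 0 < cnt Sm (a : ℕ) := Finset.card_pos.mpr ⟨b, hbfil⟩
  unfold cnt at *
  omega

lemma forward_cnt_mem {a : Fin n} (ha : IsLRMax σ a) :
    cnt (((univ : Finset (Fin n)).filter (IsLRMax σ)).image σ) ((σ a : Fin n) : ℕ)
      = cnt ((univ : Finset (Fin n)).filter (IsLRMax σ)) (a : ℕ) := by
  unfold cnt
  symm
  apply Finset.card_nbij' σ σ.symm
  · intro b hb
    rw [Finset.mem_coe, Finset.mem_filter] at hb ⊢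
    obtain ⟨hbS, hbm⟩ := hb
    have hbmax : IsLRMax σ b := (Finset.mem_filter.mp hbS).2
    refine ⟨Finset.mem_image.mpr ⟨b, hbS, rfl⟩, ?_⟩
    have hble : σ b ≤ σ a := ha b (Fin.le_def.mpr (by omega))
    have hbne : σ b ≠ σ a := fun he => by
      have := σ.injective he
      subst this
      omega
    have := Fin.lt_def.mp (lt_of_le_of_ne hble hbne)
    omega
  · intro v hv
    rw [Finset.mem_coe, Finset.mem_filter] at hv ⊢
    obtain ⟨hvT, hvm⟩ := hv
    obtain ⟨c, hc, rfl⟩ := Finset.mem_image.mp hvT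
    rw [Equiv.symm_apply_apply]
    refine ⟨hc, ?_⟩
    have hcm : IsLRMax σ c := (Finset.mem_filter.mp hc).2
    by_contra hcon
    push_neg at hcon
    have hca : a ≤ c := Fin.le_def.mpr (by omega)
    have : σ a ≤ σ c := hcm a hca
    have : ((σ a : Fin n) : ℕ) ≤ ((σ c : Fin n) : ℕ) := Fin.le_def.mp this
    omega
  · intro b _; exact Equiv.symm_apply_apply σ b
  · intro v _; exact Equiv.apply_symm_apply σ v

lemma forward_cnt_not_mem (hAv : Avoids321 σ) {a : Fin n} (ha : ¬ IsLRMax σ a) :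
    cnt ((((univ : Finset (Fin n)).filter (IsLRMax σ)).image σ)ᶜ) ((σ a : Fin n) : ℕ)
      = cnt (((univ : Finset (Fin n)).filter (IsLRMax σ))ᶜ) (a : ℕ) := by
  unfold cnt
  symm
  apply Finset.card_nbij' σ σ.symm
  · intro b hb
    rw [Finset.mem_coe, Finset.mem_filter] at hb ⊢
    obtain ⟨hbS, hbm⟩ := hb
    have hbnm : ¬ IsLRMax σ b := by
      intro h
      exact (Finset.mem_compl.mp hbS) (Finset.mem_filter.mpr ⟨Finset.mem_univ _, h⟩)
    refine ⟨Finset.mem_compl.mpr (not_mem_Tm σ hbnm), ?_⟩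
    have := Fin.lt_def.mp (not_lr_lt σ hAv hbnm (Fin.lt_def.mpr hbm))
    omega
  · intro v hv
    rw [Finset.mem_coe, Finset.mem_filter] at hv ⊢
    obtain ⟨hvT, hvm⟩ := hv
    have hvnm : ¬ IsLRMax σ (σ.symm v) := by
      intro h
      have := mem_Tm σ h
      rw [Equiv.apply_symm_apply] at this
      exact (Finset.mem_compl.mp hvT) this
    refine ⟨Finset.mem_compl.mpr (fun h => hvnm (Finset.mem_filter.mp h).2), ?_⟩
    by_contra hcon
    push_neg at hcon
    have hac : a ≤ σ.symm v := Fin.le_def.mpr (by omega)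
    have hane : a ≠ σ.symm v := by
      intro he
      rw [he, Equiv.apply_symm_apply] at hvm
      omega
    have := not_lr_lt σ hAv ha (lt_of_le_of_ne hac hane)
    rw [Equiv.apply_symm_apply] at this
    have := Fin.lt_def.mp this
    omega
  · intro b _; exact Equiv.symm_apply_apply σ b
  · intro v _; exact Equiv.apply_symm_apply σ v

lemma forward_eq (hAv : Avoids321 σ) :
    buildPerm ((univ : Finset (Fin n)).filter (IsLRMax σ))
      (((univ : Finset (Fin n)).filter (IsLRMax σ)).image σ) (forward_card σ) = σ := by
  apply Equiv.ext
  intro a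
  by_cases ha : a ∈ (univ : Finset (Fin n)).filter (IsLRMax σ)
  · have hmaxa : IsLRMax σ a := (Finset.mem_filter.mp ha).2
    refine cnt_inj (A := ((univ : Finset (Fin n)).filter (IsLRMax σ)).image σ)
      (buildPerm_mem _ _ _ ha) (mem_Tm σ hmaxa) ?_
    rw [buildPerm_cnt _ _ _ ha, forward_cnt_mem σ hmaxa]
  · have hmaxa : ¬ IsLRMax σ a := fun h => ha (Finset.mem_filter.mpr ⟨Finset.mem_univ _, h⟩)
    refine cnt_inj (A := ((((univ : Finset (Fin n)).filter (IsLRMax σ)).image σ))ᶜ)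
      (Finset.mem_compl.mpr (buildPerm_not_mem _ _ _ ha))
      (Finset.mem_compl.mpr (not_mem_Tm σ hmaxa)) ?_
    rw [buildPerm_cnt' _ _ _ ha, forward_cnt_not_mem σ hAv hmaxa]

end Forward

section Assemble

lemma buildPerm_congr {S S' T T' : Finset (Fin n)} (hS : S = S') (hT : T = T')
    (h : S.card = T.card) (h' : S'.card = T'.card) :
    buildPerm S T h = buildPerm S' T' h' := by
  subst hS; subst hT; rfl

lemma mem_short {PQ : (Fin n → Bool) × (Fin n → Bool)} (h : PQ ∈ ShortSet n) :
    IsShortPoly PQ.1 PQ.2 := by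
  rw [ShortSet, Finset.mem_filter] at h
  exact h.2

lemma short_area {P Q : Fin n → Bool} (h : IsShortPoly P Q) :
    areaPoly P Q = invPerm (buildPerm (falseSet Q) (falseSet P) (short_card h)) := by
  have hle := short_le h
  have hstrict := short_strict h
  set σ := buildPerm (falseSet Q) (falseSet P) (short_card h) with hσdef
  have himg : (falseSet Q).image σ = falseSet P := build_image (short_card h)
  have hmaxiff : ∀ a : Fin n, IsLRMax σ a ↔ a ∈ falseSet Q := by
    intro a
    constructor
    · intro hm
      by_contra hc
      exact build_not_isLRMax (short_card h) hle hstrict hc hm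
    · intro hmem
      exact build_isLRMax (short_card h) hle hmem
  have hInv := inv_eq_sum σ (build_avoids (short_card h)) (falseSet Q) hmaxiff
  have hEQ : eSum Q = ∑ a ∈ falseSet Q, ((a : ℕ) - cnt (falseSet Q) (a : ℕ)) := eSum_eq Q
  have hcnt : ∀ a ∈ falseSet Q,
      cnt (falseSet P) ((σ a : Fin n) : ℕ) = cnt (falseSet Q) (a : ℕ) := by
    intro a ha
    exact buildPerm_cnt _ _ _ ha
  have hEP : eSum P = ∑ a ∈ falseSet Q, (((σ a : Fin n) : ℕ) - cnt (falseSet Q) (a : ℕ)) := by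
    rw [eSum_eq P]
    have hsum := Finset.sum_image (s := falseSet Q) (g := σ)
      (f := fun t : Fin n => (t : ℕ) - cnt (falseSet P) (t : ℕ))
      (fun y _ z _ hyz => σ.injective hyz)
    rw [himg] at hsum
    rw [hsum]
    exact Finset.sum_congr rfl (fun a ha => by simp only [hcnt a ha])
  have key : ∀ a ∈ falseSet Q,
      ((σ a : Fin n) : ℕ) - cnt (falseSet Q) (a : ℕ)
        = (((σ a : Fin n) : ℕ) - (a : ℕ)) + ((a : ℕ) - cnt (falseSet Q) (a : ℕ)) := by
    intro a ha
    have h1 : cnt (falseSet Q) (a : ℕ) ≤ (a : ℕ) := cnt_le (falseSet Q) a.isLt.le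
    have h2 : (a : ℕ) ≤ ((σ a : Fin n) : ℕ) := le_apply_of_mem (short_card h) hle ha
    omega
  have hfinal : eSum P = invPerm σ + eSum Q := by
    rw [hEP, hEQ, hInv, ← Finset.sum_add_distrib]
    exact Finset.sum_congr rfl key
  unfold areaPoly
  omega

lemma short_col {P Q : Fin n → Bool} (h : IsShortPoly P Q) :
    colPoly Q = lrm (buildPerm (falseSet Q) (falseSet P) (short_card h)) := by
  have hfil := build_lrmax_filter (short_card h) (short_le h) (short_strict h)
  unfold lrm colPoly
  rw [hfil]
  rfl

/-- The upper path of the polyomino associated to a permutation. -/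
def pathP (σ : Equiv.Perm (Fin n)) : Fin n → Bool :=
  fun v => ! decide (v ∈ ((univ : Finset (Fin n)).filter (IsLRMax σ)).image σ)

/-- The lower path of the polyomino associated to a permutation. -/
def pathQ (σ : Equiv.Perm (Fin n)) : Fin n → Bool :=
  fun a => ! decide (IsLRMax σ a)

lemma falseSet_pathQ (σ : Equiv.Perm (Fin n)) :
    falseSet (pathQ σ) = (univ : Finset (Fin n)).filter (IsLRMax σ) := by
  ext a; simp [falseSet, pathQ]

lemma falseSet_pathP (σ : Equiv.Perm (Fin n)) :
    falseSet (pathP σ) = ((univ : Finset (Fin n)).filter (IsLRMax σ)).image σ := by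
  ext a; simp [falseSet, pathP]

lemma forward_short (σ : Equiv.Perm (Fin n)) (hAv : Avoids321 σ) :
    IsShortPoly (pathP σ) (pathQ σ) := by
  refine ⟨?_, ?_, ?_⟩
  · have h1 := upCt_add_cnt (pathP σ) (le_refl n)
    have h2 := upCt_add_cnt (pathQ σ) (le_refl n)
    rw [falseSet_pathP, cnt_card] at h1
    rw [falseSet_pathQ, cnt_card] at h2
    have h3 := forward_card σ
    omega
  · intro i hi
    have h1 := upCt_add_cnt (pathP σ) hi
    have h2 := upCt_add_cnt (pathQ σ) hi
    rw [falseSet_pathP] at h1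
    rw [falseSet_pathQ] at h2
    have h3 := forward_le σ i hi
    omega
  · intro j hj hPQ
    obtain ⟨hP, hQ⟩ := hPQ
    have hjS : j ∉ (univ : Finset (Fin n)).filter (IsLRMax σ) := by
      intro hmem
      have hfalse : pathQ σ j = false := by
        simp [pathQ, (Finset.mem_filter.mp hmem).2]
      rw [hQ] at hfalse
      exact Bool.noConfusion hfalse
    have hstr := forward_strict σ j hjS
    have h1 := upCt_add_cnt (pathP σ) j.isLt.le
    have h2 := upCt_add_cnt (pathQ σ) j.isLt.le
    rw [falseSet_pathP] at h1
    rw [falseSet_pathQ] at h2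
    omega

end Assemble

end Stmt8Aux


/-- there is a bijection Υ from shortened polyominoes `ℋ_n` to `Av_n(321)`
with `area(P,Q) = inv Υ(P,Q)` and `col(P,Q) = lrm Υ(P,Q)`. -/
theorem stmt8 (n : ℕ) (hn : 1 ≤ n) :
    ∃ Υ : {PQ : (Fin n → Bool) × (Fin n → Bool) // PQ ∈ ShortSet n} →
        {σ : Equiv.Perm (Fin n) // σ ∈ Av n},
      Function.Bijective Υ ∧
        ∀ PQ : {PQ : (Fin n → Bool) × (Fin n → Bool) // PQ ∈ ShortSet n},
          areaPoly PQ.1.1 PQ.1.2 = invPerm (Υ PQ).1 ∧ colPoly PQ.1.2 = lrm (Υ PQ).1 := by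
  classical
  refine ⟨fun x => ⟨Stmt8Aux.buildPerm (Stmt8Aux.falseSet x.1.2) (Stmt8Aux.falseSet x.1.1)
      (Stmt8Aux.short_card (Stmt8Aux.mem_short x.2)),
      by
        simp only [Av, Finset.mem_filter]
        exact ⟨Finset.mem_univ _, Stmt8Aux.build_avoids _⟩⟩, ⟨?_, ?_⟩, ?_⟩
  · -- injectivity
    intro x y hxy
    have hval : Stmt8Aux.buildPerm (Stmt8Aux.falseSet x.1.2) (Stmt8Aux.falseSet x.1.1)
          (Stmt8Aux.short_card (Stmt8Aux.mem_short x.2))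
        = Stmt8Aux.buildPerm (Stmt8Aux.falseSet y.1.2) (Stmt8Aux.falseSet y.1.1)
          (Stmt8Aux.short_card (Stmt8Aux.mem_short y.2)) := congrArg Subtype.val hxy
    have hSx := Stmt8Aux.build_lrmax_filter (Stmt8Aux.short_card (Stmt8Aux.mem_short x.2))
      (Stmt8Aux.short_le (Stmt8Aux.mem_short x.2)) (Stmt8Aux.short_strict (Stmt8Aux.mem_short x.2))
    have hSy := Stmt8Aux.build_lrmax_filter (Stmt8Aux.short_card (Stmt8Aux.mem_short y.2))
      (Stmt8Aux.short_le (Stmt8Aux.mem_short y.2)) (Stmt8Aux.short_strict (Stmt8Aux.mem_short y.2))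
    have hSeq : Stmt8Aux.falseSet x.1.2 = Stmt8Aux.falseSet y.1.2 := by
      rw [← hSx, ← hSy, hval]
    have hTx := Stmt8Aux.build_image (Stmt8Aux.short_card (Stmt8Aux.mem_short x.2))
    have hTy := Stmt8Aux.build_image (Stmt8Aux.short_card (Stmt8Aux.mem_short y.2))
    have step : (Stmt8Aux.falseSet x.1.2).image
          (Stmt8Aux.buildPerm (Stmt8Aux.falseSet x.1.2) (Stmt8Aux.falseSet x.1.1)
            (Stmt8Aux.short_card (Stmt8Aux.mem_short x.2)))
        = (Stmt8Aux.falseSet y.1.2).image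
          (Stmt8Aux.buildPerm (Stmt8Aux.falseSet y.1.2) (Stmt8Aux.falseSet y.1.1)
            (Stmt8Aux.short_card (Stmt8Aux.mem_short y.2))) := by
      rw [hval, hSeq]
    have hTeq : Stmt8Aux.falseSet x.1.1 = Stmt8Aux.falseSet y.1.1 :=
      hTx.symm.trans (step.trans hTy)
    apply Subtype.ext
    have h1 : x.1.1 = y.1.1 := Stmt8Aux.falseSet_inj hTeq
    have h2 : x.1.2 = y.1.2 := Stmt8Aux.falseSet_inj hSeq
    exact Prod.ext h1 h2
  · -- surjectivity
    intro s
    have hAv : Avoids321 s.1 := by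
      have hs := s.2
      simp only [Av, Finset.mem_filter] at hs
      exact hs.2
    have hshort : IsShortPoly (Stmt8Aux.pathP s.1) (Stmt8Aux.pathQ s.1) :=
      Stmt8Aux.forward_short s.1 hAv
    refine ⟨⟨(Stmt8Aux.pathP s.1, Stmt8Aux.pathQ s.1), ?_⟩, ?_⟩
    · rw [ShortSet, Finset.mem_filter]
      exact ⟨Finset.mem_univ _, hshort⟩
    · apply Subtype.ext
      exact (Stmt8Aux.buildPerm_congr (Stmt8Aux.falseSet_pathQ s.1) (Stmt8Aux.falseSet_pathP s.1)
        (Stmt8Aux.short_card hshort) (Stmt8Aux.forward_card s.1)).trans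
        (Stmt8Aux.forward_eq s.1 hAv)
  · -- statistics
    intro PQ
    exact ⟨Stmt8Aux.short_area (Stmt8Aux.mem_short PQ.2), Stmt8Aux.short_col (Stmt8Aux.mem_short PQ.2)⟩
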